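/- Let p be an odd prime, G = SL₂(Z/p²Z)/{±I}, B the image of Γ₀(p²) in G, and define for x ∈ Z/p²Z and a ∈ Z/pZ the line U_x^a = Span{ Σ_{k mod p} e(−ak/p) u_{x+kp} } inside the permutation module C[G/B], where u_x = (x −1; 1 0)B. Then U_x^a depends only on x mod p, the generator T = (1 1; 0 1) sends U_x^a to U_{x+1}^a, and S = (0 −1; 1 0) sends U_x^a to U_{−x^{−1}}^{a x²} for x invertible. -/

import Mathlib

open Matrix

/-- The subgroup `Γ₀(p²)` of `SL₂(ℤ/p²ℤ)`: matrices whose lower-left entry is `0`. -/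
def BorelSubgroup (n : ℕ) : Subgroup (Matrix.SpecialLinearGroup (Fin 2) (ZMod n)) where
  carrier := {A | A.1 1 0 = 0}
  one_mem' := by simp [Matrix.SpecialLinearGroup.coe_one, Matrix.one_apply]
  mul_mem' := by
    intro A B hA hB
    simp only [Set.mem_setOf_eq] at *
    simp [Matrix.SpecialLinearGroup.coe_mul, Matrix.mul_apply, Fin.sum_univ_two, hA, hB]
  inv_mem' := by
    intro A hA
    simp only [Set.mem_setOf_eq] at *
    simp [Matrix.SpecialLinearGroup.coe_inv, Matrix.adjugate_fin_two, hA]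

/-- The central subgroup `{±I}` of `SL₂(ℤ/nℤ)`. -/
def pmOne (n : ℕ) : Subgroup (Matrix.SpecialLinearGroup (Fin 2) (ZMod n)) :=
  Subgroup.zpowers (-1)

instance pmOne_normal (n : ℕ) : (pmOne n).Normal := by
  constructor
  intro x hx g
  obtain ⟨k, rfl⟩ := Subgroup.mem_zpowers_iff.mp hx
  have hc : Commute g (-1 : Matrix.SpecialLinearGroup (Fin 2) (ZMod n)) := by
    unfold Commute SemiconjBy
    ext i j
    simp [Matrix.SpecialLinearGroup.coe_mul]
  have : g * (-1) ^ k * g⁻¹ = (-1) ^ k := by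
    rw [(hc.zpow_right k).eq, mul_assoc, mul_inv_cancel, mul_one]
  rw [this]
  exact Subgroup.mem_zpowers_iff.mpr ⟨k, rfl⟩

/-- `G = SL₂(ℤ/p²ℤ)/{±I}`. -/
def PSLmod (n : ℕ) : Type := Matrix.SpecialLinearGroup (Fin 2) (ZMod n) ⧸ pmOne n

instance (n : ℕ) : Group (PSLmod n) := QuotientGroup.Quotient.group _

/-- The image `B` of `Γ₀(p²)` in `G = SL₂(ℤ/p²ℤ)/{±I}`. -/
def BorelImage (n : ℕ) : Subgroup (PSLmod n) :=
  (BorelSubgroup n).map (QuotientGroup.mk' (pmOne n))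

open Complex

/-- The coset `u_x = (x −1; 1 0)B` in `G/B`, for `G = SL₂(ℤ/p²ℤ)/{±I}` and `B` the image of
`Γ₀(p²)`. -/
def uCoset (p : ℕ) (x : ZMod (p ^ 2)) : PSLmod (p ^ 2) ⧸ BorelImage (p ^ 2) :=
  QuotientGroup.mk (QuotientGroup.mk' (pmOne (p ^ 2))
    ⟨!![x, -1; 1, 0], by rw [Matrix.det_fin_two_of]; ring⟩)

open scoped Classical in
/-- The vector `Σ_{k mod p} e(−ak/p) u_{x+kp}` in the permutation module `ℂ[G/B]`. -/
noncomputable def wVec (p : ℕ) [Fact p.Prime] (x : ZMod (p ^ 2)) (a : ZMod p) :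
    (PSLmod (p ^ 2) ⧸ BorelImage (p ^ 2)) → ℂ :=
  fun c => ∑ k : ZMod p,
    if c = uCoset p (x + (k.val : ZMod (p ^ 2)) * (p : ZMod (p ^ 2))) then
      Complex.exp (-(2 * Real.pi * Complex.I) * (a.val : ℂ) * (k.val : ℂ) / (p : ℂ))
    else 0

/-- The line `U_x^a = Span{Σ_{k mod p} e(−ak/p) u_{x+kp}}` inside `ℂ[G/B]`. -/
noncomputable def Uline (p : ℕ) [Fact p.Prime] (x : ZMod (p ^ 2)) (a : ZMod p) :
    Submodule ℂ ((PSLmod (p ^ 2) ⧸ BorelImage (p ^ 2)) → ℂ) :=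
  Submodule.span ℂ {wVec p x a}

/-- The linear action of `g ∈ G` on the permutation module `ℂ[G/B]`, `(g • f)(c) = f(g⁻¹ • c)`. -/
def actL (p : ℕ) (g : PSLmod (p ^ 2)) :
    ((PSLmod (p ^ 2) ⧸ BorelImage (p ^ 2)) → ℂ) →ₗ[ℂ]
      ((PSLmod (p ^ 2) ⧸ BorelImage (p ^ 2)) → ℂ) where
  toFun := fun f c => f (g⁻¹ • c)
  map_add' := fun _ _ => rfl
  map_smul' := fun _ _ => rfl

/-- The image of `T = (1 1; 0 1)` in `G`. -/
def Tbar (p : ℕ) : PSLmod (p ^ 2) :=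
  QuotientGroup.mk' (pmOne (p ^ 2)) ⟨!![1, 1; 0, 1], by rw [Matrix.det_fin_two_of]; ring⟩

/-- The image of `S = (0 −1; 1 0)` in `G`. -/
def Sbar (p : ℕ) : PSLmod (p ^ 2) :=
  QuotientGroup.mk' (pmOne (p ^ 2)) ⟨!![0, -1; 1, 0], by rw [Matrix.det_fin_two_of]; ring⟩


section Aux
set_option linter.unusedSectionVars false
variable (p : ℕ) [Fact p.Prime]


def piRed : ZMod (p^2) →+* ZMod p := ZMod.castHom (dvd_pow_self p (two_ne_zero)) (ZMod p)

lemma pp_zero : (p : ZMod (p^2)) * p = 0 := by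
  have : ((p^2 : ℕ) : ZMod (p^2)) = 0 := ZMod.natCast_self _
  push_cast at this
  linear_combination this

lemma pmul0 (w : ZMod (p^2)) (h : piRed p w = 0) : w * p = 0 := by
  have hv : ((w.val : ℕ) : ZMod p) = 0 := by
    rw [ZMod.natCast_val]; rwa [piRed, ZMod.castHom_apply] at h
  have hd : p ∣ w.val := (ZMod.natCast_eq_zero_iff _ _).mp hv
  obtain ⟨c, hc⟩ := hd
  have hw : ((w.val : ℕ) : ZMod (p^2)) = w := by simp [ZMod.natCast_val, ZMod.cast_id]
  calc w * p = ((w.val : ℕ) : ZMod (p^2)) * p := by rw [hw]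
  _ = (c : ZMod (p^2)) * ((p:ZMod (p^2)) * p) := by rw [hc]; push_cast; ring
  _ = 0 := by rw [pp_zero]; ring

lemma pmul (u v : ZMod (p^2)) (h : piRed p u = piRed p v) : u * p = v * p := by
  have := pmul0 p (u - v) (by rw [_root_.map_sub, h, sub_self])
  linear_combination this

def psi (k : ZMod p) : ZMod (p^2) := (k.val : ZMod (p^2)) * (p : ZMod (p^2))

lemma piRed_natCast (m : ℕ) : piRed p ((m : ZMod (p^2))) = (m : ZMod p) := by
  simp [piRed]

lemma piRed_psi (k : ZMod p) : piRed p (psi p k) = 0 := by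
  simp [psi, _root_.map_mul, piRed_natCast, ZMod.natCast_self]

lemma valCast (k : ZMod p) : ((k.val : ℕ) : ZMod p) = k := by simp [ZMod.natCast_val, ZMod.cast_id]

lemma psi_add (s t : ZMod p) : psi p (s + t) = psi p s + psi p t := by
  have : psi p s + psi p t = ((s.val + t.val : ℕ) : ZMod (p^2)) * p := by push_cast [psi]; ring
  rw [this, psi]
  apply pmul
  rw [piRed_natCast, piRed_natCast]
  push_cast [valCast]
  simp

lemma psi_mul (s : ZMod p) (u : ZMod (p^2)) : u * psi p s = psi p (s * piRed p u) := by
  have : u * psi p s = ((s.val : ZMod (p^2)) * u) * p := by rw [psi]; ring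
  rw [this, psi]
  apply pmul
  rw [_root_.map_mul, piRed_natCast, piRed_natCast, valCast, valCast]

lemma psi_mul_psi (s t : ZMod p) : psi p s * psi p t = 0 := by
  have : psi p s * psi p t = ((s.val : ZMod (p^2)) * t.val) * ((p:ZMod (p^2)) * p) := by rw [psi, psi]; ring
  rw [this, pp_zero, mul_zero]

lemma psi_zero : psi p 0 = 0 := by simp [psi]

lemma psi_one : psi p 1 = (p : ZMod (p^2)) := by
  rw [psi, ZMod.val_one p]; simp

noncomputable def zeta (s : ZMod p) : ℂ :=
  Complex.exp (-(2 * Real.pi * Complex.I) * (s.val : ℂ) / (p : ℂ))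

lemma expE (m n : ℕ) (h : (m : ZMod p) = (n : ZMod p)) :
    Complex.exp (-(2 * Real.pi * Complex.I) * (m : ℂ) / (p : ℂ)) =
    Complex.exp (-(2 * Real.pi * Complex.I) * (n : ℂ) / (p : ℂ)) := by
  obtain ⟨t, ht⟩ := ((ZMod.natCast_eq_natCast_iff m n p).mp h).dvd
  have hp : (p : ℂ) ≠ 0 := by exact_mod_cast (Nat.Prime.pos (Fact.out)).ne'
  have hn : (n : ℂ) = (m : ℂ) + (p : ℂ) * (t : ℂ) := by
    have := congrArg (fun z : ℤ => (z : ℂ)) ht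
    push_cast at this
    linear_combination this
  rw [Complex.exp_eq_exp_iff_exists_int]
  refine ⟨t, ?_⟩
  rw [hn]
  field_simp
  ring

lemma zeta_ne_zero (s : ZMod p) : zeta p s ≠ 0 := Complex.exp_ne_zero _

lemma exp_eq_zeta (a k : ZMod p) :
    Complex.exp (-(2 * Real.pi * Complex.I) * (a.val : ℂ) * (k.val : ℂ) / (p : ℂ)) =
    zeta p (a * k) := by
  have h1 : -(2 * Real.pi * Complex.I) * (a.val : ℂ) * (k.val : ℂ) / (p : ℂ)
      = -(2 * Real.pi * Complex.I) * ((a.val * k.val : ℕ) : ℂ) / (p : ℂ) := by push_cast; ring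
  rw [h1, zeta]
  apply expE
  push_cast [ZMod.natCast_val, ZMod.cast_id]
  rfl

lemma zeta_add (s t : ZMod p) : zeta p (s + t) = zeta p s * zeta p t := by
  rw [zeta, zeta, zeta, ← Complex.exp_add]
  have h1 : -(2 * Real.pi * Complex.I) * ((s.val : ℕ) : ℂ) / (p:ℂ) + -(2 * Real.pi * Complex.I) * ((t.val : ℕ):ℂ) / (p:ℂ)
      = -(2 * Real.pi * Complex.I) * ((s.val + t.val : ℕ) : ℂ) / (p : ℂ) := by push_cast; ring
  rw [h1]
  apply expE
  push_cast [ZMod.natCast_val, ZMod.cast_id]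
  rfl

end Aux
section Coset
variable (p : ℕ) [Fact p.Prime]

lemma smul_uCoset (g : Matrix.SpecialLinearGroup (Fin 2) (ZMod (p^2))) (y z : ZMod (p^2))
    (hy : Matrix.det !![y, -1; 1, 0] = 1) (hz : Matrix.det !![z, -1; 1, 0] = 1)
    (gb : PSLmod (p^2)) (hgb : gb = QuotientGroup.mk' (pmOne (p^2)) g)
    (h : (((g * ⟨!![y,-1;1,0], hy⟩)⁻¹ * ⟨!![z,-1;1,0], hz⟩ :
        Matrix.SpecialLinearGroup (Fin 2) (ZMod (p^2)))).1 1 0 = 0) :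
    gb • uCoset p y = uCoset p z := by
  subst hgb
  unfold uCoset
  show (QuotientGroup.mk ((QuotientGroup.mk' (pmOne (p^2)) g) *
      QuotientGroup.mk' (pmOne (p ^ 2)) ⟨!![y, -1; 1, 0], hy⟩) :
        PSLmod (p^2) ⧸ BorelImage (p^2))
    = QuotientGroup.mk (QuotientGroup.mk' (pmOne (p ^ 2)) ⟨!![z, -1; 1, 0], hz⟩)
  apply QuotientGroup.eq.mpr
  exact Subgroup.mem_map_of_mem (QuotientGroup.mk' (pmOne (p^2))) h
end Coset
section Entries
variable (p : ℕ) [Fact p.Prime]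

lemma detM (n : ℕ) (y : ZMod n) : Matrix.det !![y, -1; 1, 0] = 1 := by
  rw [Matrix.det_fin_two_of]; ring

def Mu (n : ℕ) (y : ZMod n) : Matrix.SpecialLinearGroup (Fin 2) (ZMod n) :=
  ⟨!![y, -1; 1, 0], detM n y⟩

def Tmat (n : ℕ) : Matrix.SpecialLinearGroup (Fin 2) (ZMod n) :=
  ⟨!![1, 1; 0, 1], by rw [Matrix.det_fin_two_of]; ring⟩

def Smat (n : ℕ) : Matrix.SpecialLinearGroup (Fin 2) (ZMod n) :=
  ⟨!![0, -1; 1, 0], by rw [Matrix.det_fin_two_of]; ring⟩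

lemma entryT (y : ZMod (p^2)) :
    (((Tmat (p^2) * Mu (p^2) y)⁻¹ * Mu (p^2) (y+1))).1 1 0 = 0 := by
  simp only [Matrix.SpecialLinearGroup.coe_inv, Matrix.SpecialLinearGroup.coe_mul]
  simp [Tmat, Mu, Matrix.SpecialLinearGroup.coe_inv, Matrix.SpecialLinearGroup.coe_mul,
    Matrix.adjugate_fin_two, Matrix.mul_apply, Fin.sum_univ_two]

lemma entryS (y z : ZMod (p^2)) (hyz : y * z = -1) :
    (((Smat (p^2) * Mu (p^2) y)⁻¹ * Mu (p^2) z)).1 1 0 = 0 := by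
  simp only [Matrix.SpecialLinearGroup.coe_inv, Matrix.SpecialLinearGroup.coe_mul]
  simp [Smat, Mu, Matrix.SpecialLinearGroup.coe_inv, Matrix.SpecialLinearGroup.coe_mul,
    Matrix.adjugate_fin_two, Matrix.mul_apply, Fin.sum_univ_two]
  linear_combination -hyz
end Entries
section Master
variable (p : ℕ) [Fact p.Prime]

open scoped Classical in
lemma wVec_apply (x : ZMod (p^2)) (a : ZMod p) (c : PSLmod (p ^ 2) ⧸ BorelImage (p ^ 2)) :
    wVec p x a c = ∑ k : ZMod p,
      if c = uCoset p (x + psi p k) then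
        Complex.exp (-(2 * Real.pi * Complex.I) * (a.val : ℂ) * (k.val : ℂ) / (p : ℂ))
      else 0 := rfl

open scoped Classical in
lemma map_Uline (g : PSLmod (p^2)) (x x' : ZMod (p^2)) (a a' b : ZMod p)
    (φ : ZMod p → ZMod p) (hφ : Function.Bijective φ)
    (h1 : ∀ k : ZMod p, g • uCoset p (x + psi p k) = uCoset p (x' + psi p (φ k)))
    (h2 : ∀ k : ZMod p, a' * φ k = a * k + b) :
    Submodule.map (actL p g) (Uline p x a) = Uline p x' a' := by
  have key : wVec p x' a' = zeta p b • actL p g (wVec p x a) := by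
    funext c
    have hact : actL p g (wVec p x a) c = wVec p x a (g⁻¹ • c) := rfl
    rw [Pi.smul_apply, hact, smul_eq_mul, wVec_apply, wVec_apply, Finset.mul_sum]
    refine (Fintype.sum_bijective φ hφ _ _ ?_).symm
    intro k
    simp only [inv_smul_eq_iff, h1 k]
    by_cases hc : c = uCoset p (x' + psi p (φ k))
    · simp only [if_pos hc]
      rw [exp_eq_zeta, exp_eq_zeta, h2 k, zeta_add]
      ring
    · simp only [if_neg hc]; ring
  rw [Uline, Uline, Submodule.map_span, Set.image_singleton, key,
    Submodule.span_singleton_smul_eq ((zeta_ne_zero p b).isUnit) _]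
end Master
/-- `U_x^a` depends only on `x mod p`; `T` sends `U_x^a` to `U_{x+1}^a`; and for `x`
invertible, `S` sends `U_x^a` to `U_{−x⁻¹}^{a x²}` (where `x²` is taken mod `p`). -/
theorem Uline_properties (p : ℕ) [Fact p.Prime] (hodd : Odd p) :
    (∀ (x : ZMod (p ^ 2)) (a : ZMod p), Uline p (x + (p : ZMod (p ^ 2))) a = Uline p x a) ∧
    (∀ (x : ZMod (p ^ 2)) (a : ZMod p),
      Submodule.map (actL p (Tbar p)) (Uline p x a) = Uline p (x + 1) a) ∧
    (∀ (x : ZMod (p ^ 2)) (a : ZMod p), IsUnit x →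
      Submodule.map (actL p (Sbar p)) (Uline p x a) =
        Uline p (-x⁻¹)
          (a * (ZMod.castHom (dvd_pow_self p (two_ne_zero)) (ZMod p) x) ^ 2)) := by
  refine ⟨?_, ?_, ?_⟩
  · -- depends only on x mod p
    intro x a
    have hid : actL p (1 : PSLmod (p^2)) = LinearMap.id := by
      ext f c
      show f ((1 : PSLmod (p^2))⁻¹ • c) = f c
      rw [inv_one, one_smul]
    calc Uline p (x + (p : ZMod (p^2))) a
        = Submodule.map (actL p 1) (Uline p (x + (p : ZMod (p^2))) a) := by
          rw [hid, Submodule.map_id]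
      _ = Uline p x a := by
          apply map_Uline p 1 _ _ a a a (· + 1) (Equiv.addRight 1).bijective
          · intro k
            rw [one_smul]
            congr 1
            rw [psi_add, psi_one]
            ring
          · intro k; ring
  · -- T
    intro x a
    apply map_Uline p (Tbar p) x (x+1) a a 0 id Function.bijective_id
    · intro k
      have hz : x + 1 + psi p k = (x + psi p k) + 1 := by ring
      simp only [id_eq]
      rw [hz]
      exact smul_uCoset p (Tmat (p^2)) (x + psi p k) ((x + psi p k) + 1)
        (detM _ _) (detM _ _) (Tbar p) rfl (entryT p (x + psi p k))
    · intro k; simp only [id_eq, add_zero]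
  · -- S
    intro x a hx
    set xb := ZMod.castHom (dvd_pow_self p (two_ne_zero)) (ZMod p) x with hxb_def
    have hxb : IsUnit xb := hx.map _
    have hx1 : x * x⁻¹ = 1 := ZMod.mul_inv_of_unit x hx
    have hxb1 : xb⁻¹ * xb = 1 := ZMod.inv_mul_of_unit xb hxb
    have hpiinv : piRed p (x⁻¹) = xb⁻¹ := by
      have h1 : xb * piRed p (x⁻¹) = 1 := by
        rw [hxb_def]
        rw [show (ZMod.castHom (dvd_pow_self p (two_ne_zero)) (ZMod p)) x = piRed p x from rfl,
          ← _root_.map_mul, hx1, _root_.map_one]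
      calc piRed p (x⁻¹) = (xb⁻¹ * xb) * piRed p (x⁻¹) := by rw [hxb1, one_mul]
        _ = xb⁻¹ * (xb * piRed p (x⁻¹)) := by ring
        _ = xb⁻¹ := by rw [h1, mul_one]
    have hinv2 : (xb⁻¹)^2 * xb^2 = 1 := by rw [← mul_pow, hxb1, one_pow]
    have hφ : Function.Bijective (fun k : ZMod p => k * (xb⁻¹)^2) := by
      rw [Function.bijective_iff_has_inverse]
      exact ⟨fun j => j * xb^2,
        fun k => by simp only; rw [mul_assoc, hinv2, mul_one],
        fun j => by simp only; rw [mul_assoc, mul_comm (xb^2) ((xb⁻¹)^2), hinv2, mul_one]⟩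
    apply map_Uline p (Sbar p) x (-x⁻¹) a (a * xb^2) 0 _ hφ
    · intro k
      have hyz : (x + psi p k) * (-x⁻¹ + psi p (k * (xb⁻¹)^2)) = -1 := by
        have e1 : (x + psi p k) * (-x⁻¹ + psi p (k * (xb⁻¹)^2))
            = -(x * x⁻¹) + x * psi p (k * (xb⁻¹)^2) - x⁻¹ * psi p k
              + psi p k * psi p (k * (xb⁻¹)^2) := by ring
        rw [e1, hx1, psi_mul, psi_mul, psi_mul_psi, hpiinv]
        have e2 : k * (xb⁻¹)^2 * piRed p x = k * xb⁻¹ := by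
          rw [show piRed p x = xb from rfl]
          calc k * (xb⁻¹)^2 * xb = k * xb⁻¹ * (xb⁻¹ * xb) := by ring
            _ = k * xb⁻¹ := by rw [hxb1, mul_one]
        rw [e2]
        ring
      exact smul_uCoset p (Smat (p^2)) (x + psi p k) (-x⁻¹ + psi p (k * (xb⁻¹)^2))
        (detM _ _) (detM _ _) (Sbar p) rfl (entryS p _ _ hyz)
    · intro k
      show a * xb^2 * (k * (xb⁻¹)^2) = a * k + 0
      calc a * xb^2 * (k * (xb⁻¹)^2) = a * k * ((xb⁻¹)^2 * xb^2) := by ring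
        _ = a * k + 0 := by rw [hinv2, mul_one, add_zero]
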